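/- arXiv:2509.25975 — 3 statements merged into one kernel-verified Lean document; each statement's English description precedes it below -/
import Mathlib

section
/- Define Π^j = (θ_j P^j)/(A P^{j-1}) · (P^J + S Σ_{k=j}^J θ_k P^k) for j = I+1,…,J. If all forward term rates R^j are nonnegative, then Π^j R^j ≤ S for every j = I+1,…,J. -/
open Finset

/-- If all forward term rates are nonnegative, then `Pi j * R j ≤ S` for every
`j = I+1, …, J`. -/
theorem Pi_R_le_S
    (I J : ℕ) (hIJ : I < J)
    (θ P R Pi : ℕ → ℝ) (A S : ℝ)
    (hθ : ∀ j ∈ Icc (I + 1) J, 0 < θ j)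
    (hP : ∀ j ∈ Icc I J, 0 < P j)
    (hR : ∀ j ∈ Icc (I + 1) J, R j = (P (j - 1) / P j - 1) / θ j)
    (hRnn : ∀ j ∈ Icc (I + 1) J, 0 ≤ R j)
    (hA : A = ∑ j ∈ Icc (I + 1) J, θ j * P j)
    (hS : S = (P I - P J) / A)
    (hPi : ∀ j ∈ Icc (I + 1) J,
      Pi j = (θ j * P j) / (A * P (j - 1)) * (P J + S * ∑ k ∈ Icc j J, θ k * P k)) :
    ∀ j ∈ Icc (I + 1) J, Pi j * R j ≤ S := by
  -- one-step monotonicity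
  have step : ∀ k, I + 1 ≤ k → k ≤ J → P k ≤ P (k - 1) := by
    intro k h1 h2
    have hk : k ∈ Icc (I + 1) J := mem_Icc.mpr ⟨h1, h2⟩
    have hr := hRnn k hk
    rw [hR k hk] at hr
    have hθk := hθ k hk
    have hPk := hP k (mem_Icc.mpr ⟨by omega, h2⟩)
    have hPk1 := hP (k - 1) (mem_Icc.mpr ⟨by omega, by omega⟩)
    have h3 : 0 ≤ P (k - 1) / P k - 1 := by
      have := mul_nonneg hr hθk.le
      rwa [div_mul_cancel₀ _ (ne_of_gt hθk)] at this
    have h4 : 1 ≤ P (k - 1) / P k := by linarith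
    rwa [le_div_iff₀ hPk, one_mul] at h4
  -- monotonicity
  have mono : ∀ a b : ℕ, I ≤ a → a ≤ b → b ≤ J → P b ≤ P a := by
    intro a b ha hab hbJ
    induction b with
    | zero =>
      have : a = 0 := by omega
      simp [this]
    | succ c ih =>
      rcases Nat.lt_or_ge a (c + 1) with h | h
      · have hac : a ≤ c := Nat.lt_succ_iff.mp h
        have h1 : P (c + 1) ≤ P c := by
          have := step (c + 1) (by omega) hbJ
          simpa using this
        exact h1.trans (ih hac (by omega))
      · have : a = c + 1 := le_antisymm hab h
        simp [this]
  have hApos : 0 < A := by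
    rw [hA]
    apply sum_pos
    · intro k hk
      have hkm := mem_Icc.mp hk
      exact mul_pos (hθ k hk) (hP k (mem_Icc.mpr ⟨by omega, hkm.2⟩))
    · exact nonempty_Icc.mpr (by omega)
  have hPI : 0 < P I := hP I (mem_Icc.mpr ⟨le_refl _, by omega⟩)
  have hPJleI : P J ≤ P I := mono I J (le_refl _) (by omega) (le_refl _)
  have hSnn : 0 ≤ S := by
    rw [hS]; exact div_nonneg (by linarith) hApos.le
  have hSA : S * A = P I - P J := by
    rw [hS]; field_simp
  intro j hj
  have hjm := mem_Icc.mp hj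
  have hPj : 0 < P j := hP j (mem_Icc.mpr ⟨by omega, hjm.2⟩)
  have hPj1 : 0 < P (j - 1) := hP (j - 1) (mem_Icc.mpr ⟨by omega, by omega⟩)
  have hθj := hθ j hj
  have hstep : P j ≤ P (j - 1) := step j hjm.1 hjm.2
  have hPJj : P J ≤ P j := mono j J (by omega) hjm.2 (le_refl _)
  have hPj1I : P (j - 1) ≤ P I := mono I (j - 1) (le_refl _) (by omega) (by omega)
  set B := ∑ k ∈ Icc j J, θ k * P k with hB
  have hBnn : 0 ≤ B := by
    apply sum_nonneg
    intro k hk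
    have hkm := mem_Icc.mp hk
    have hk' : k ∈ Icc (I + 1) J := mem_Icc.mpr ⟨by omega, hkm.2⟩
    exact le_of_lt (mul_pos (hθ k hk') (hP k (mem_Icc.mpr ⟨by omega, hkm.2⟩)))
  have hBA : B ≤ A := by
    rw [hA]
    apply sum_le_sum_of_subset_of_nonneg
    · exact Icc_subset_Icc_left (by omega)
    · intro k hk _
      have hkm := mem_Icc.mp hk
      exact le_of_lt (mul_pos (hθ k hk) (hP k (mem_Icc.mpr ⟨by omega, hkm.2⟩)))
  have hSB : S * B ≤ P I - P J := by
    calc S * B ≤ S * A := mul_le_mul_of_nonneg_left hBA hSnn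
    _ = P I - P J := hSA
  have h1 : P J + S * B ≤ P I := by linarith
  have h1nn : 0 ≤ P J + S * B := by
    have : 0 < P J := hP J (mem_Icc.mpr ⟨by omega, le_refl _⟩)
    nlinarith [mul_nonneg hSnn hBnn]
  have hcross : P J * P (j - 1) ≤ P j * P I :=
    mul_le_mul hPJj hPj1I hPj1.le hPj.le
  -- key inequality
  have hkey : (P (j - 1) - P j) * (P J + S * B) ≤ (P I - P J) * P (j - 1) := by
    nlinarith [mul_le_mul_of_nonneg_left h1 (by linarith : (0:ℝ) ≤ P (j - 1) - P j)]
  -- rewrite Pi j * R j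
  have heq : Pi j * R j = (P (j - 1) - P j) * (P J + S * B) / (A * P (j - 1)) := by
    rw [hPi j hj, hR j hj]
    field_simp
    ring
  have h2 : S * (A * P (j - 1)) = (P I - P J) * P (j - 1) := by
    rw [← hSA]; ring
  rw [heq, div_le_iff₀ (by positivity)]
  linarith [hkey]
end

section
/- The ratio R^j Π^j / S admits the decomposition R^j Π^j / S = (θ_j R^j / (1 + θ_j R^j)) · ( 1/(∏_{i=I+1}^J (1 + θ_i R^i) − 1) + (1/A) Σ_{k=j}^J θ_k P^k ), valid whenever S > 0 (equivalently P^I > P^J). -/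
open Finset

lemma telescope_prod (g : ℕ → ℝ) (I : ℕ) :
    ∀ J, I ≤ J → (∀ i ∈ Icc I J, g i ≠ 0) →
      ∏ i ∈ Icc (I + 1) J, g (i - 1) / g i = g I / g J := by
  intro J
  induction J with
  | zero =>
      intro hIJ hg
      interval_cases I
      simp [div_self (hg 0 (by simp))]
  | succ J ih =>
      intro hIJ hg
      rcases Nat.lt_or_ge I (J + 1) with h | h
      · have hIJ' : I ≤ J := Nat.lt_succ_iff.mp h
        rw [Finset.prod_Icc_succ_top (by omega : I + 1 ≤ J + 1)]
        rw [ih hIJ' (fun i hi => hg i (by simp at hi ⊢; omega))]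
        have hgJ : g J ≠ 0 := hg J (by simp; omega)
        simp only [Nat.add_sub_cancel]
        field_simp
      · have : I = J + 1 := le_antisymm hIJ h
        subst this
        simp [div_self (hg (J + 1) (by simp))]

/-- Decomposition of `R j * Pi j / S` into the two bounded pieces. -/
theorem R_Pi_over_S_decomposition
    (I J : ℕ) (hIJ : I < J)
    (θ P R Pi : ℕ → ℝ) (A S : ℝ)
    (hθ : ∀ j ∈ Icc (I + 1) J, 0 < θ j)
    (hP : ∀ j ∈ Icc I J, 0 < P j)
    (hPIJ : P J < P I)
    (hR : ∀ j ∈ Icc (I + 1) J, R j = (P (j - 1) / P j - 1) / θ j)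
    (hA : A = ∑ k ∈ Icc (I + 1) J, θ k * P k)
    (hS : S = (P I - P J) / A)
    (hPi : ∀ j ∈ Icc (I + 1) J,
      Pi j = (θ j * P j) / (A * P (j - 1)) * (P J + S * ∑ k ∈ Icc j J, θ k * P k)) :
    ∀ j ∈ Icc (I + 1) J,
      R j * Pi j / S =
        (θ j * R j) / (1 + θ j * R j) *
          (1 / ((∏ i ∈ Icc (I + 1) J, (1 + θ i * R i)) - 1) +
            (1 / A) * ∑ k ∈ Icc j J, θ k * P k) := by
  have hA0 : 0 < A := by
    rw [hA]
    apply Finset.sum_pos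
    · intro k hk
      have hk' : k ∈ Icc I J := by simp at hk ⊢; omega
      exact mul_pos (hθ k hk) (hP k hk')
    · exact Finset.nonempty_Icc.mpr (by omega)
  -- product telescopes
  have hterm : ∀ i ∈ Icc (I + 1) J, 1 + θ i * R i = P (i - 1) / P i := by
    intro i hi
    have hθi := hθ i hi
    rw [hR i hi]
    field_simp
    ring
  have hprod : ∏ i ∈ Icc (I + 1) J, (1 + θ i * R i) = P I / P J := by
    rw [Finset.prod_congr rfl hterm]
    exact telescope_prod P I J hIJ.le (fun i hi => (hP i hi).ne')
  intro j hj
  have hjm : j - 1 ∈ Icc I J := by simp at hj ⊢; omega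
  have hjP : j ∈ Icc I J := by simp at hj ⊢; omega
  have hPj : (0:ℝ) < P j := hP j hjP
  have hPjm : (0:ℝ) < P (j - 1) := hP (j - 1) hjm
  have hPJ : (0:ℝ) < P J := hP J (by simp; omega)
  have hθj := hθ j hj
  have hdiff : P I - P J ≠ 0 := sub_ne_zero.mpr hPIJ.ne'
  have h1 : 1 + θ j * R j = P (j - 1) / P j := hterm j hj
  rw [hprod, hPi j hj, hS, h1, hR j hj]
  have hS0 : (P I - P J) / A ≠ 0 := div_ne_zero hdiff hA0.ne'
  field_simp
end

section
/- Hypersphere parametrization of correlation matrices: let B be an n×n real lower triangular matrix whose entries are b_{i,j} = cos(ω_{i,j}) ∏_{k=0}^{j−1} sin(ω_{i,k}) for 0 < j < i, b_{i,i} = ∏_{k=0}^{i−1} sin(ω_{i,k}), and b_{0,0} = 1 (empty products equal 1), for arbitrary angles ω_{i,k} ∈ ℝ. Then Σ = B Bᵀ is a symmetric positive semidefinite matrix with all diagonal entries equal to 1, i.e., a correlation matrix. -/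
open Finset Real Matrix

lemma hypersphere_aux (f : ℕ → ℝ) (m : ℕ) :
    (∑ j ∈ range m, (Real.cos (f j) * ∏ k ∈ range j, Real.sin (f k))^2)
      + (∏ k ∈ range m, Real.sin (f k))^2 = 1 := by
  induction m with
  | zero => simp
  | succ m ih =>
    rw [Finset.sum_range_succ, Finset.prod_range_succ, mul_pow, mul_pow]
    have : (Real.cos (f m))^2 + (Real.sin (f m))^2 = 1 := by
      rw [add_comm]; exact Real.sin_sq_add_cos_sq (f m)
    nlinarith [ih]

/-- Hypersphere parametrization: if `B` is the lower triangular matrix built from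
angles `ω` via spherical coordinates, then `Σ = B * Bᵀ` is a correlation matrix,
i.e. symmetric positive semidefinite with unit diagonal. -/
theorem hypersphere_parametrization_correlation
    (n : ℕ) (hn : 1 ≤ n)
    (ω : Fin n → ℕ → ℝ)
    (B : Matrix (Fin n) (Fin n) ℝ)
    (hB : ∀ i j : Fin n,
      B i j =
        if (j : ℕ) < (i : ℕ) then
          Real.cos (ω i j) * ∏ k ∈ range j, Real.sin (ω i k)
        else if (j : ℕ) = (i : ℕ) then ∏ k ∈ range i, Real.sin (ω i k)
        else 0) :
    (B * Bᵀ).PosSemidef ∧ ∀ i : Fin n, (B * Bᵀ) i i = 1 := by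
  constructor
  · have := Matrix.posSemidef_self_mul_conjTranspose B
    simpa using this
  · intro i
    have hentry : (B * Bᵀ) i i = ∑ j : Fin n, (B i j)^2 := by
      simp [Matrix.mul_apply, Matrix.transpose_apply, sq]
    rw [hentry]
    -- define g on ℕ
    set g : ℕ → ℝ := fun j =>
      if j < (i : ℕ) then (Real.cos (ω i j) * ∏ k ∈ range j, Real.sin (ω i k))^2
      else if j = (i : ℕ) then (∏ k ∈ range i, Real.sin (ω i k))^2
      else 0 with hg
    have h1 : ∑ j : Fin n, (B i j)^2 = ∑ j ∈ range n, g j := by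
      rw [Finset.sum_range fun j => g j]
      apply Finset.sum_congr rfl
      intro j _
      rw [hB]
      simp only [hg]
      split_ifs <;> simp
    rw [h1]
    have h2 : ∑ j ∈ range n, g j = ∑ j ∈ range ((i : ℕ) + 1), g j := by
      apply (Finset.sum_subset _ _).symm
      · exact Finset.range_subset_range.2 i.isLt
      · intro x _ hx
        simp only [Finset.mem_range, not_lt] at hx
        simp only [hg]
        rw [if_neg (by omega), if_neg (by omega)]
    rw [h2, Finset.sum_range_succ]
    have h3 : ∀ j ∈ range (i : ℕ), g j =
        (Real.cos (ω i j) * ∏ k ∈ range j, Real.sin (ω i k))^2 := by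
      intro j hj
      simp only [Finset.mem_range] at hj
      simp only [hg]
      rw [if_pos hj]
    rw [Finset.sum_congr rfl h3]
    have h4 : g (i : ℕ) = (∏ k ∈ range i, Real.sin (ω i k))^2 := by
      simp [hg]
    rw [h4]
    exact hypersphere_aux (ω i) i
end
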